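/- For a qubit (d = 2), two white-noise POVMs A_a = λ Π_a + (1-λ)/2 · 1 and B_b = γ Π'_b + (1-γ)/2 · 1 built from arbitrary rank-one PVMs are jointly measurable whenever λ² + γ² ≤ 1. -/

import Mathlib

open Matrix BigOperators ComplexOrder

set_option maxHeartbeats 1000000

lemma psd2 (u w x y : ℝ) (hsum : 0 ≤ u + w) (hdet : x^2 + y^2 ≤ u*w) :
    (!![(u:ℂ), (x:ℂ) + (y:ℂ)*Complex.I; (x:ℂ) - (y:ℂ)*Complex.I, (w:ℂ)]).PosSemidef := by
  have hu : 0 ≤ u := by nlinarith [sq_nonneg x, sq_nonneg y]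
  have hw : 0 ≤ w := by nlinarith [sq_nonneg x, sq_nonneg y]
  rw [Matrix.posSemidef_iff_dotProduct_mulVec]
  constructor
  · ext i j
    fin_cases i <;> fin_cases j <;>
      simp [Matrix.conjTranspose_apply, Complex.ext_iff]
  · intro z
    set p := (z 0).re; set q := (z 0).im; set r := (z 1).re; set s := (z 1).im
    have hz0 : z 0 = ⟨p, q⟩ := rfl
    have hz1 : z 1 = ⟨r, s⟩ := rfl
    have key : star z ⬝ᵥ mulVec !![(u:ℂ), (x:ℂ) + (y:ℂ)*Complex.I; (x:ℂ) - (y:ℂ)*Complex.I, (w:ℂ)] z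
        = ((u*(p^2+q^2) + w*(r^2+s^2) + 2*x*(p*r+q*s) - 2*y*(p*s-q*r) : ℝ) : ℂ) := by
      simp only [dotProduct, Matrix.mulVec, Fin.sum_univ_two, hz0, hz1]
      simp [Complex.ext_iff, Complex.add_re, Complex.mul_re, Complex.mul_im, ← Complex.ofReal_pow]
      constructor <;> ring
    rw [key, Complex.zero_le_real]
    rcases eq_or_lt_of_le hu with h | h
    · have hx : x = 0 := by nlinarith
      have hy : y = 0 := by nlinarith
      subst hx; subst hy
      rw [← h]
      nlinarith [mul_nonneg hw (add_nonneg (sq_nonneg r) (sq_nonneg s))]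
    · nlinarith [sq_nonneg (u*p + x*r - y*s), sq_nonneg (u*q + x*s + y*r),
        mul_nonneg (sub_nonneg.2 hdet) (add_nonneg (sq_nonneg r) (sq_nonneg s))]

noncomputable def Wmat (t v1 v2 v3 : ℝ) : Matrix (Fin 2) (Fin 2) ℂ :=
  !![(((t + v3)/4 : ℝ) : ℂ), ((v1/4 : ℝ) : ℂ) - ((v2/4 : ℝ) : ℂ) * Complex.I;
     ((v1/4 : ℝ) : ℂ) + ((v2/4 : ℝ) : ℂ) * Complex.I, (((t - v3)/4 : ℝ) : ℂ)]

lemma Wmat_psd (t v1 v2 v3 : ℝ) (ht : 0 ≤ t) (h : v1^2 + v2^2 + v3^2 ≤ t^2) :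
    (Wmat t v1 v2 v3).PosSemidef := by
  have h2 := psd2 ((t+v3)/4) ((t-v3)/4) (v1/4) (-(v2/4)) (by linarith) (by nlinarith)
  have heq : Wmat t v1 v2 v3
      = !![(((t+v3)/4 : ℝ):ℂ), ((v1/4 : ℝ):ℂ) + ((-(v2/4) : ℝ):ℂ)*Complex.I;
          ((v1/4 : ℝ):ℂ) - ((-(v2/4) : ℝ):ℂ)*Complex.I, (((t-v3)/4 : ℝ):ℂ)] := by
    ext i j
    fin_cases i <;> fin_cases j <;> simp [Wmat] <;> (push_cast; ring)
  rw [heq]; exact h2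

lemma busch_key (lam gam e f : ℝ)
    (hlam0 : 0 ≤ lam) (hgam0 : 0 ≤ gam)
    (hbusch : lam ^ 2 + gam ^ 2 ≤ 1)
    (he : e * e = 1) (hf : f * f = 1)
    (n0 n1 n2 m0 m1 m2 : ℝ)
    (hn : n0^2 + n1^2 + n2^2 = 1) (hm : m0^2 + m1^2 + m2^2 = 1) :
    0 ≤ 1 + e*f*lam*gam*(n0*m0 + n1*m1 + n2*m2) ∧
    (e*lam*n0 + f*gam*m0)^2 + (e*lam*n1 + f*gam*m1)^2 + (e*lam*n2 + f*gam*m2)^2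
      ≤ (1 + e*f*lam*gam*(n0*m0 + n1*m1 + n2*m2))^2 := by
  have hprod : (n0^2 + n1^2 + n2^2) * (m0^2 + m1^2 + m2^2) = 1 := by rw [hn, hm]; ring
  have hc2 : (n0*m0 + n1*m1 + n2*m2)^2 ≤ 1 := by
    nlinarith [hprod, sq_nonneg (n0*m1 - n1*m0), sq_nonneg (n0*m2 - n2*m0), sq_nonneg (n1*m2 - n2*m1)]
  have hcu : n0*m0 + n1*m1 + n2*m2 ≤ 1 := by nlinarith
  have hcl : -1 ≤ n0*m0 + n1*m1 + n2*m2 := by nlinarith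
  have hlg : lam * gam ≤ 1/2 := by nlinarith [sq_nonneg (lam - gam)]
  have hlg0 : 0 ≤ lam * gam := mul_nonneg hlam0 hgam0
  have e1 : lam^2*(n0^2 + n1^2 + n2^2) = lam^2 := by rw [hn]; ring
  have e2 : gam^2*(m0^2 + m1^2 + m2^2) = gam^2 := by rw [hm]; ring
  rcases mul_self_eq_one_iff.mp he with rfl | rfl <;>
    rcases mul_self_eq_one_iff.mp hf with rfl | rfl <;>
      constructor <;>
        nlinarith [e1, e2, hbusch, hc2, hcu, hcl, hlg, hlg0,
          sq_nonneg (lam*gam*(n0*m0 + n1*m1 + n2*m2))]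

/-- Busch criterion (sufficient direction) for a qubit: two white-noise POVMs
`A a = λ Π a + (1-λ)/2 · 1` and `B b = γ Π' b + (1-γ)/2 · 1` built from arbitrary rank-one
PVMs (given by Bloch vectors `n`, `m`) are jointly measurable whenever `λ² + γ² ≤ 1`. -/
theorem stmt_12 (lam gam : ℝ)
    (hlam0 : 0 ≤ lam) (hlam1 : lam ≤ 1) (hgam0 : 0 ≤ gam) (hgam1 : gam ≤ 1)
    (hbusch : lam ^ 2 + gam ^ 2 ≤ 1)
    (nv mv : Fin 3 → ℝ) (hn : ∑ i, nv i ^ 2 = 1) (hm : ∑ i, mv i ^ 2 = 1)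
    (σ : Fin 3 → Matrix (Fin 2) (Fin 2) ℂ)
    (hσ : σ = ![!![0, 1; 1, 0], !![0, -Complex.I; Complex.I, 0], !![1, 0; 0, -1]])
    (P Q : Fin 2 → Matrix (Fin 2) (Fin 2) ℂ)
    (hP : ∀ a, P a = ((1 / 2 : ℝ) : ℂ) •
      ((1 : Matrix (Fin 2) (Fin 2) ℂ) + ((-1 : ℂ) ^ (a : ℕ)) • ∑ i, (nv i : ℂ) • σ i))
    (hQ : ∀ b, Q b = ((1 / 2 : ℝ) : ℂ) •
      ((1 : Matrix (Fin 2) (Fin 2) ℂ) + ((-1 : ℂ) ^ (b : ℕ)) • ∑ i, (mv i : ℂ) • σ i))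
    (A B : Fin 2 → Matrix (Fin 2) (Fin 2) ℂ)
    (hA : ∀ a, A a = (lam : ℂ) • P a + (((1 - lam) / 2 : ℝ) : ℂ) • 1)
    (hB : ∀ b, B b = (gam : ℂ) • Q b + (((1 - gam) / 2 : ℝ) : ℂ) • 1) :
    ∃ W : Fin 2 → Fin 2 → Matrix (Fin 2) (Fin 2) ℂ,
      (∀ a b, (W a b).PosSemidef) ∧ (∑ a, ∑ b, W a b = 1) ∧
      (∀ a, ∑ b, W a b = A a) ∧ (∀ b, ∑ a, W a b = B b) := by
  have hn' : nv 0^2 + nv 1^2 + nv 2^2 = 1 := by simpa [Fin.sum_univ_three] using hn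
  have hm' : mv 0^2 + mv 1^2 + mv 2^2 = 1 := by simpa [Fin.sum_univ_three] using hm
  have hsq : ∀ k : ℕ, ((-1:ℝ)^k) * ((-1:ℝ)^k) = 1 := by
    intro k
    rw [← pow_add, ← two_mul, pow_mul]
    norm_num
  refine ⟨fun a b => Wmat (1 + (-1:ℝ)^(a:ℕ)*(-1:ℝ)^(b:ℕ)*lam*gam*(nv 0*mv 0 + nv 1*mv 1 + nv 2*mv 2))
      ((-1:ℝ)^(a:ℕ)*lam*nv 0 + (-1:ℝ)^(b:ℕ)*gam*mv 0)
      ((-1:ℝ)^(a:ℕ)*lam*nv 1 + (-1:ℝ)^(b:ℕ)*gam*mv 1)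
      ((-1:ℝ)^(a:ℕ)*lam*nv 2 + (-1:ℝ)^(b:ℕ)*gam*mv 2), ?_, ?_, ?_, ?_⟩
  · intro a b
    obtain ⟨h1, h2⟩ := busch_key lam gam ((-1:ℝ)^(a:ℕ)) ((-1:ℝ)^(b:ℕ)) hlam0 hgam0 hbusch
      (hsq a) (hsq b) (nv 0) (nv 1) (nv 2) (mv 0) (mv 1) (mv 2) hn' hm'
    exact Wmat_psd _ _ _ _ (by nlinarith [h1]) (by nlinarith [h2])
  · ext i j
    fin_cases i <;> fin_cases j <;>
      · simp [Fin.sum_univ_two, Wmat, Matrix.one_apply, Fin.val_zero, Fin.val_one]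
        push_cast
        ring
  · intro a
    rw [hA a, hP a, hσ]
    ext i j
    fin_cases i <;> fin_cases j <;>
      · simp [Fin.sum_univ_two, Fin.sum_univ_three, Wmat, Matrix.one_apply,
          Fin.val_zero, Fin.val_one]
        push_cast
        ring
  · intro b
    rw [hB b, hQ b, hσ]
    ext i j
    fin_cases i <;> fin_cases j <;>
      · simp [Fin.sum_univ_two, Fin.sum_univ_three, Wmat, Matrix.one_apply,
          Fin.val_zero, Fin.val_one]
        push_cast
        ring
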